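/- Let V, Q₁, Q₂ be real normed spaces and b¹ : V × Q₁ → ℝ, b² : V × Q₂ → ℝ bounded bilinear forms. Let Ker(b²) = {v ∈ V : b²(v, q₂) = 0 for all q₂ ∈ Q₂}. Suppose: (i) there is c₁ > 0 with c₁‖q₁‖ ≤ sup_{0 ≠ v ∈ Ker(b²)} b¹(v, q₁)/‖v‖ for all q₁ ∈ Q₁; (ii) there is c₂ > 0 with c₂‖q₂‖ ≤ sup_{0 ≠ v ∈ V} b²(v, q₂)/‖v‖ for all q₂ ∈ Q₂; and (iii) |b¹(v, q₁)| ≤ C‖v‖‖q₁‖ for all v, q₁. Then there exists c > 0 such that for all (q₁, q₂) ∈ Q₁ × Q₂, c(‖q₁‖² + ‖q₂‖²)^{1/2} ≤ sup_{0 ≠ v ∈ V} (b¹(v,q₁) + b²(v,q₂))/‖v‖. -/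

import Mathlib

theorem stmt_9 {V Q₁ Q₂ : Type*} [NormedAddCommGroup V] [NormedSpace ℝ V]
    [NormedAddCommGroup Q₁] [NormedSpace ℝ Q₁]
    [NormedAddCommGroup Q₂] [NormedSpace ℝ Q₂]
    (b₁ : V →L[ℝ] Q₁ →L[ℝ] ℝ) (b₂ : V →L[ℝ] Q₂ →L[ℝ] ℝ)
    (c₁ c₂ C : ℝ) (hc₁ : 0 < c₁) (hc₂ : 0 < c₂) (hC : 0 ≤ C)
    (hinf₁ : ∀ q₁ : Q₁, c₁ * ‖q₁‖ ≤
      ⨆ v : {v : V // (∀ q₂ : Q₂, b₂ v q₂ = 0) ∧ v ≠ 0}, b₁ v q₁ / ‖(v : V)‖)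
    (hinf₂ : ∀ q₂ : Q₂, c₂ * ‖q₂‖ ≤ ⨆ v : {v : V // v ≠ 0}, b₂ v q₂ / ‖(v : V)‖)
    (hbound : ∀ (v : V) (q₁ : Q₁), |b₁ v q₁| ≤ C * ‖v‖ * ‖q₁‖) :
    ∃ c > 0, ∀ (q₁ : Q₁) (q₂ : Q₂),
      c * Real.sqrt (‖q₁‖ ^ 2 + ‖q₂‖ ^ 2) ≤
        ⨆ v : {v : V // v ≠ 0}, (b₁ v q₁ + b₂ v q₂) / ‖(v : V)‖ := by
  refine ⟨c₁ * c₂ / (c₁ + c₂ + C), by positivity, fun q₁ q₂ => ?_⟩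
  set f : {v : V // v ≠ 0} → ℝ := fun v => (b₁ v q₁ + b₂ v q₂) / ‖(v : V)‖ with hf
  have hbdd : BddAbove (Set.range f) := by
    refine ⟨‖b₁‖ * ‖q₁‖ + ‖b₂‖ * ‖q₂‖, ?_⟩
    rintro _ ⟨⟨v, hv⟩, rfl⟩
    have hv0 : (0 : ℝ) < ‖v‖ := norm_pos_iff.mpr hv
    have h1 : |b₁ v q₁| ≤ ‖b₁‖ * ‖v‖ * ‖q₁‖ := by
      simpa using b₁.le_opNorm₂ v q₁
    have h2 : |b₂ v q₂| ≤ ‖b₂‖ * ‖v‖ * ‖q₂‖ := by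
      simpa using b₂.le_opNorm₂ v q₂
    have h5 : b₁ v q₁ ≤ |b₁ v q₁| := le_abs_self _
    have h6 : b₂ v q₂ ≤ |b₂ v q₂| := le_abs_self _
    show (b₁ v q₁ + b₂ v q₂) / ‖v‖ ≤ _
    rw [div_le_iff₀ hv0]
    nlinarith [norm_nonneg b₁, norm_nonneg b₂, norm_nonneg q₁, norm_nonneg q₂]
  set S : ℝ := ⨆ v : {v : V // v ≠ 0}, f v with hS
  have hS0 : 0 ≤ S := by
    by_cases h : Nonempty {v : V // v ≠ 0}
    · obtain ⟨⟨v, hv⟩⟩ := h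
      have h1 : f ⟨v, hv⟩ ≤ S := le_ciSup hbdd _
      have h2 : f ⟨-v, neg_ne_zero.mpr hv⟩ ≤ S := le_ciSup hbdd _
      have hsum : f ⟨v, hv⟩ + f ⟨-v, neg_ne_zero.mpr hv⟩ = 0 := by
        simp only [hf, map_neg, ContinuousLinearMap.neg_apply, norm_neg]
        ring
      linarith
    · have : IsEmpty {v : V // v ≠ 0} := not_nonempty_iff.mp h
      rw [hS, iSup_of_empty', Real.sSup_empty]
  -- Step 1 : c₁ ‖q₁‖ ≤ S
  have hq1 : c₁ * ‖q₁‖ ≤ S := by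
    refine (hinf₁ q₁).trans (Real.iSup_le ?_ hS0)
    rintro ⟨v, hker, hv⟩
    have : b₁ v q₁ / ‖v‖ = f ⟨v, hv⟩ := by
      simp only [hf, hker q₂, add_zero]
    rw [this]
    exact le_ciSup hbdd _
  -- Step 2 : c₂ ‖q₂‖ ≤ S + C ‖q₁‖
  have hq2 : c₂ * ‖q₂‖ ≤ S + C * ‖q₁‖ := by
    refine (hinf₂ q₂).trans (Real.iSup_le ?_ (by positivity)) 
    rintro ⟨v, hv⟩
    have hv0 : (0 : ℝ) < ‖v‖ := norm_pos_iff.mpr hv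
    have h1 : f ⟨v, hv⟩ ≤ S := le_ciSup hbdd _
    have h2 : -(b₁ v q₁) ≤ C * ‖v‖ * ‖q₁‖ := (neg_le_abs _).trans (hbound v q₁)
    have h3 : b₂ v q₂ / ‖v‖ = f ⟨v, hv⟩ + (-(b₁ v q₁)) / ‖v‖ := by
      simp only [hf]
      field_simp
      ring
    have h4 : (-(b₁ v q₁)) / ‖v‖ ≤ C * ‖q₁‖ := by
      rw [div_le_iff₀ hv0]
      nlinarith
    rw [h3]
    linarith
  -- combine
  have hsq : Real.sqrt (‖q₁‖ ^ 2 + ‖q₂‖ ^ 2) ≤ ‖q₁‖ + ‖q₂‖ := by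
    have h : ‖q₁‖ ^ 2 + ‖q₂‖ ^ 2 ≤ (‖q₁‖ + ‖q₂‖) ^ 2 := by
      nlinarith [norm_nonneg q₁, norm_nonneg q₂]
    calc Real.sqrt (‖q₁‖ ^ 2 + ‖q₂‖ ^ 2) ≤ Real.sqrt ((‖q₁‖ + ‖q₂‖) ^ 2) :=
          Real.sqrt_le_sqrt h
      _ = ‖q₁‖ + ‖q₂‖ := Real.sqrt_sq (by positivity)
  have key : c₁ * c₂ * (‖q₁‖ + ‖q₂‖) ≤ (c₁ + c₂ + C) * S := by
    nlinarith [norm_nonneg q₁]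
  have hden : (0 : ℝ) < c₁ + c₂ + C := by positivity
  rw [div_mul_eq_mul_div, div_le_iff₀ hden]
  calc c₁ * c₂ * Real.sqrt (‖q₁‖ ^ 2 + ‖q₂‖ ^ 2)
      ≤ c₁ * c₂ * (‖q₁‖ + ‖q₂‖) := by
        exact mul_le_mul_of_nonneg_left hsq (by positivity)
    _ ≤ (c₁ + c₂ + C) * S := key
    _ = S * (c₁ + c₂ + C) := by ring
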